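/- Let ρ ∈ (0,1) and let S_ρ(θ) = max{θ − ρ, 0} be a call option with strike ρ. Let S : [0,1] → ℝ be any security (nondecreasing, θ − S(θ) nondecreasing, 0 ≤ S(θ) ≤ θ) with neither weakly dominating the other. Then S_ρ single-crosses S from below, and consequently S is safer than the call option. -/
import Mathlib


theorem stmt_15 (ρ : ℝ) (hρ : ρ ∈ Set.Ioo (0:ℝ) 1) (S : ℝ → ℝ)
    (hmono : MonotoneOn S (Set.Icc (0:ℝ) 1))
    (hfirm : MonotoneOn (fun θ => θ - S θ) (Set.Icc (0:ℝ) 1))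
    (hll : ∀ θ ∈ Set.Icc (0:ℝ) 1, 0 ≤ S θ ∧ S θ ≤ θ)
    (hnd1 : ∃ θ ∈ Set.Icc (0:ℝ) 1, S θ > max (θ - ρ) 0)
    (hnd2 : ∃ θ ∈ Set.Icc (0:ℝ) 1, max (θ - ρ) 0 > S θ) :
    (∃ θbar : ℝ, (∀ θ ∈ Set.Icc (0:ℝ) 1, θ ≤ θbar → S θ ≥ max (θ - ρ) 0) ∧
      (∀ θ ∈ Set.Icc (0:ℝ) 1, θ ≥ θbar → max (θ - ρ) 0 ≥ S θ)) ∧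
    (∀ θ ∈ Set.Icc (0:ℝ) 1, ∀ θ' ∈ Set.Icc (0:ℝ) 1,
      S θ > max (θ - ρ) 0 → max (θ' - ρ) 0 > S θ' →
        max (θ' - ρ) 0 ≥ S θ ∧ S θ' ≥ max (θ - ρ) 0) := by
  obtain ⟨hρ0, hρ1⟩ := hρ
  -- Lipschitz-type bound
  have hlip : ∀ x ∈ Set.Icc (0:ℝ) 1, ∀ y ∈ Set.Icc (0:ℝ) 1, x ≤ y →
      S x ≤ S y ∧ S y - S x ≤ y - x := by
    intro x hx y hy hxy
    have h1 := hmono hx hy hxy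
    have h2 := hfirm hx hy hxy
    simp only at h2
    exact ⟨h1, by linarith⟩
  -- single-crossing key lemma
  have hL : ∀ x ∈ Set.Icc (0:ℝ) 1, ∀ y ∈ Set.Icc (0:ℝ) 1, x ≤ y →
      S x < max (x - ρ) 0 → S y - max (y - ρ) 0 ≤ S x - max (x - ρ) 0 := by
    intro x hx y hy hxy hxlt
    have hSx0 : 0 ≤ S x := (hll x hx).1
    have hxρ : ρ < x := by
      by_contra h
      push_neg at h
      have : max (x - ρ) 0 = 0 := max_eq_right (by linarith)
      rw [this] at hxlt; linarith
    have hgx : max (x - ρ) 0 = x - ρ := max_eq_left (by linarith)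
    have hgy : max (y - ρ) 0 = y - ρ := max_eq_left (by linarith)
    have := (hlip x hx y hy hxy).2
    rw [hgx, hgy]; linarith
  -- second conclusion
  have main2 : ∀ θ ∈ Set.Icc (0:ℝ) 1, ∀ θ' ∈ Set.Icc (0:ℝ) 1,
      S θ > max (θ - ρ) 0 → max (θ' - ρ) 0 > S θ' →
        max (θ' - ρ) 0 ≥ S θ ∧ S θ' ≥ max (θ - ρ) 0 := by
    intro θ hθ θ' hθ' h1 h2
    have hle : θ ≤ θ' := by
      by_contra h
      push_neg at h
      have := hL θ' hθ' θ hθ h.le h2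
      linarith
    have hS := (hlip θ hθ θ' hθ' hle).1
    exact ⟨by linarith, by linarith⟩
  refine ⟨?_, main2⟩
  -- first conclusion: crossing point
  obtain ⟨b0, hb0, hb0gt⟩ := hnd2
  set B : Set ℝ := {θ | θ ∈ Set.Icc (0:ℝ) 1 ∧ max (θ - ρ) 0 > S θ} with hB
  have hBne : B.Nonempty := ⟨b0, hb0, hb0gt⟩
  have hBsub : ∀ b ∈ B, ρ < b ∧ b ∈ Set.Icc (0:ℝ) 1 := by
    intro b hb
    obtain ⟨hbI, hbgt⟩ := hb
    refine ⟨?_, hbI⟩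
    by_contra h
    push_neg at h
    have : max (b - ρ) 0 = 0 := max_eq_right (by linarith)
    rw [this] at hbgt
    have := (hll b hbI).1
    linarith
  have hBbdd : BddBelow B := ⟨0, fun b hb => (hBsub b hb).2.1⟩
  set θbar := sInf B with hθbar
  have hθbarρ : ρ ≤ θbar := le_csInf hBne (fun b hb => (hBsub b hb).1.le)
  have hθbar1 : θbar ≤ 1 := csInf_le_of_le hBbdd (show b0 ∈ B from ⟨hb0, hb0gt⟩) hb0.2
  have hθbarI : θbar ∈ Set.Icc (0:ℝ) 1 := ⟨by linarith, hθbar1⟩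
  -- below θbar (strictly): S ≥ call
  have hbelow : ∀ θ ∈ Set.Icc (0:ℝ) 1, θ < θbar → S θ ≥ max (θ - ρ) 0 := by
    intro θ hθ hlt
    by_contra h
    push_neg at h
    have : θbar ≤ θ := csInf_le hBbdd ⟨hθ, h⟩
    linarith
  -- S θbar ≥ max (θbar - ρ) 0
  have hSbar_ge : S θbar ≥ max (θbar - ρ) 0 := by
    rcases eq_or_lt_of_le hθbarρ with heq | hlt
    · have : max (θbar - ρ) 0 = 0 := max_eq_right (by linarith [heq])
      rw [this]; exact (hll θbar hθbarI).1
    · have hgbar : max (θbar - ρ) 0 = θbar - ρ := max_eq_left (by linarith)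
      rw [hgbar]
      have key : ∀ ε > (0:ℝ), θbar - ρ ≤ S θbar + ε := by
        intro ε hε
        set δ := min ε (θbar - ρ) with hδ
        have hδpos : 0 < δ := lt_min hε (by linarith)
        have hδ1 : δ ≤ ε := min_le_left _ _
        have hδ2 : δ ≤ θbar - ρ := min_le_right _ _
        set θ := θbar - δ with hθdef
        have hθI : θ ∈ Set.Icc (0:ℝ) 1 := ⟨by simp [hθdef]; linarith, by simp [hθdef]; linarith⟩
        have hθlt : θ < θbar := by simp [hθdef]; linarith
        have h1 := hbelow θ hθI hθlt
        have hgθ : max (θ - ρ) 0 = θ - ρ := max_eq_left (by simp [hθdef]; linarith)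
        rw [hgθ] at h1
        have hS := (hlip θ hθI θbar hθbarI hθlt.le).1
        simp only [hθdef] at h1 hS ⊢
        linarith
      linarith [le_of_forall_pos_le_add key]
  -- max (θbar - ρ) 0 ≥ S θbar
  have hSbar_le : max (θbar - ρ) 0 ≥ S θbar := by
    have key : ∀ ε > (0:ℝ), S θbar ≤ max (θbar - ρ) 0 + ε := by
      intro ε hε
      obtain ⟨b, hbB, hblt⟩ := exists_lt_of_csInf_lt hBne (show sInf B < θbar + ε by linarith)
      obtain ⟨hbI, hbgt⟩ := hbB
      have hθb : θbar ≤ b := csInf_le hBbdd ⟨hbI, hbgt⟩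
      have hS := (hlip θbar hθbarI b hbI hθb).1
      -- g b ≤ g θbar + (b - θbar)
      have hg : max (b - ρ) 0 ≤ max (θbar - ρ) 0 + (b - θbar) := by
        apply max_le
        · have : θbar - ρ ≤ max (θbar - ρ) 0 := le_max_left _ _
          linarith
        · have : (0:ℝ) ≤ max (θbar - ρ) 0 := le_max_right _ _
          linarith
      linarith
    exact le_of_forall_pos_le_add key
  refine ⟨θbar, ?_, ?_⟩
  · intro θ hθ hle
    rcases eq_or_lt_of_le hle with heq | hlt
    · rw [heq]; exact hSbar_ge
    · exact hbelow θ hθ hlt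
  · intro θ hθ hge
    rcases eq_or_lt_of_le hge with heq | hlt
    · rw [← heq]; exact hSbar_le
    · obtain ⟨b, hbB, hblt⟩ := exists_lt_of_csInf_lt hBne hlt
      obtain ⟨hbI, hbgt⟩ := hbB
      have := hL b hbI θ hθ hblt.le hbgt
      linarith
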